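/- cov(M) ≤ d_⋔, where cov(M) is the least cardinality of a family of meager subsets of 2^ω covering 2^ω and d_⋔ is the least cardinality of a ⋔-dominating family in 2^ω. -/

import Mathlib

open Filter Set Cardinal Topology

/-- The interval partition of ℕ with |Iₙ| = 2^(n+1): Iₙ = [2^(n+1) - 2, 2^(n+2) - 2). -/
def intervalI (n : ℕ) : Set ℕ := Set.Ico (2 ^ (n + 1) - 2) (2 ^ (n + 2) - 2)

/-- f ⋔ g iff for all but finitely many k, f↾Iₖ ≠ g↾Iₖ. -/
def Fork (f g : ℕ → Bool) : Prop := ∀ᶠ k in atTop, ∃ j ∈ intervalI k, f j ≠ g j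

lemma intervalI_nonempty (n : ℕ) : (2 ^ (n + 1) - 2) ∈ intervalI n := by
  have h1 : 2 ≤ 2 ^ (n + 1) := Nat.one_lt_two_pow (by omega)
  have h2 : 2 ^ (n + 1) < 2 ^ (n + 2) := Nat.pow_lt_pow_right (by norm_num) (by omega)
  exact ⟨le_rfl, by omega⟩

lemma intervalI_lb (k : ℕ) : k ≤ 2 ^ (k + 1) - 2 := by
  have : k < 2 ^ k := @Nat.lt_two_pow_self k
  have : 2 * (k + 1) ≤ 2 * 2 ^ k := by omega
  have h2 : 2 ^ (k + 1) = 2 * 2 ^ k := by ring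
  omega

/-- C N f : the x that differ from f on every interval from N on. -/
def Cset (N : ℕ) (f : ℕ → Bool) : Set (ℕ → Bool) :=
  {x | ∀ k ≥ N, ∃ j ∈ intervalI k, x j ≠ f j}

lemma isClosed_Cset (N : ℕ) (f : ℕ → Bool) : IsClosed (Cset N f) := by
  have : Cset N f = ⋂ k, ⋂ (_ : N ≤ k), ⋃ j ∈ intervalI k, {x : ℕ → Bool | x j ≠ f j} := by
    ext x
    simp [Cset]
  rw [this]
  refine isClosed_iInter fun k => isClosed_iInter fun _ => ?_
  refine Set.Finite.isClosed_biUnion (Set.finite_Ico _ _) fun j _ => ?_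
  show IsClosed ((fun x : ℕ → Bool => x j) ⁻¹' {b | b ≠ f j})
  exact IsClosed.preimage (continuous_apply j) (isClosed_discrete {b : Bool | b ≠ f j})

lemma interior_Cset (N : ℕ) (f : ℕ → Bool) : interior (Cset N f) = ∅ := by
  classical
  by_contra h
  obtain ⟨x, hx⟩ := Set.nonempty_iff_ne_empty.2 h
  have hnhds : interior (Cset N f) ∈ 𝓝 x := isOpen_interior.mem_nhds hx
  rw [nhds_pi, Filter.mem_pi] at hnhds
  obtain ⟨I, hIfin, t, ht, hts⟩ := hnhds
  set y : ℕ → Bool := fun j => if j ∈ I then x j else f j with hy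
  have hyC : y ∈ Cset N f := by
    apply interior_subset
    apply hts
    intro i hi
    simp only [hy, if_pos hi]
    exact mem_of_mem_nhds (ht i)
  -- choose k ≥ N with intervalI k disjoint from I
  obtain ⟨m, hm⟩ := hIfin.bddAbove
  obtain ⟨j, hj, hne⟩ := hyC (max N (m + 1)) (le_max_left _ _)
  have hjI : j ∉ I := by
    intro hjmem
    have h1 : j ≤ m := hm hjmem
    have h2 : max N (m + 1) ≤ 2 ^ (max N (m + 1) + 1) - 2 := intervalI_lb _
    have h3 : 2 ^ (max N (m + 1) + 1) - 2 ≤ j := hj.1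
    have : m + 1 ≤ max N (m + 1) := le_max_right _ _
    omega
  apply hne
  simp [hy, if_neg hjI]

lemma meagre_fork (f : ℕ → Bool) : IsMeagre {x : ℕ → Bool | Fork x f} := by
  rw [IsMeagre]
  have heq : {x : ℕ → Bool | Fork x f} = ⋃ N : ℕ, Cset N f := by
    ext x
    simp [Fork, eventually_atTop, Cset]
  rw [heq, Set.compl_iUnion]
  refine (countable_iInter_mem.2) fun N => ?_
  refine residual_of_dense_open (isClosed_Cset N f).isOpen_compl ?_
  exact interior_eq_empty_iff_dense_compl.1 (interior_Cset N f)

/-- cov(M) ≤ d_⋔ on Cantor space. -/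
theorem stmt9 :
    sInf {c : Cardinal | ∃ 𝒜 : Set (Set (ℕ → Bool)), #𝒜 = c ∧
        (∀ A ∈ 𝒜, IsMeagre A) ∧ ⋃₀ 𝒜 = Set.univ} ≤
      sInf {c : Cardinal | ∃ D : Set (ℕ → Bool), #D = c ∧
        ∀ x : ℕ → Bool, ∃ f ∈ D, Fork x f} := by
  have hne : {c : Cardinal | ∃ D : Set (ℕ → Bool), #D = c ∧
      ∀ x : ℕ → Bool, ∃ f ∈ D, Fork x f}.Nonempty := by
    refine ⟨#(Set.univ : Set (ℕ → Bool)), Set.univ, rfl, fun x => ?_⟩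
    refine ⟨fun n => !x n, Set.mem_univ _, Filter.Eventually.of_forall fun k => ?_⟩
    exact ⟨2 ^ (k + 1) - 2, intervalI_nonempty k, by simp⟩
  refine le_csInf hne ?_
  rintro c ⟨D, rfl, hD⟩
  have hmem : #((fun f => {x : ℕ → Bool | Fork x f}) '' D) ∈
      {c : Cardinal | ∃ 𝒜 : Set (Set (ℕ → Bool)), #𝒜 = c ∧
        (∀ A ∈ 𝒜, IsMeagre A) ∧ ⋃₀ 𝒜 = Set.univ} := by
    refine ⟨_, rfl, ?_, ?_⟩
    · rintro A ⟨f, -, rfl⟩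
      exact meagre_fork f
    · apply Set.eq_univ_of_forall
      intro x
      obtain ⟨f, hf, hxf⟩ := hD x
      exact ⟨{y | Fork y f}, ⟨f, hf, rfl⟩, hxf⟩
  exact le_trans (csInf_le' hmem) Cardinal.mk_image_le
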